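/- arXiv:2509.10868 — 2 statements merged into one kernel-verified Lean document; each statement's English description precedes it below -/
import Mathlib

section
/- Let f = (a₁,…,a_r) ∈ F_r with r ≥ 1, set a = a_r and let f̄ = (a₁,…,a_{r−1}) ∈ F_{r−1}. Then the map sending g = (b₁,…,b_{r−1}) to h = (b₁,…,b_{r−1}, a) is a well-defined bijection from ♭f̄ onto ♭_{1/2} f = {g ∈ ♭f : D_cap(g) contains the cap joining a to a+1}. -/
open Finset

namespace KacCatalan

/-- A weight `f : ℤ → {×,·}` (with finitely many `×`) is encoded by the finite
set `f⁻¹(×) ⊆ ℤ`; membership `x ∈ f` means `f(x) = ×`. -/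
abbrev Weight := Finset ℤ

/-- `f` and `g` are equal up to shift, i.e. the entries of `f` are obtained from
those of `g` by adding a fixed constant. -/
def UpToShift (f g : Weight) : Prop := ∃ k : ℤ, f = g.image (fun x => x + k)

/-- The largest entry `a_r` of `f` (junk value `0` for `f = ∅`). -/
def maxD (f : Weight) : ℤ := f.max.getD 0

/-- The smallest entry `a₁` of `f` (junk value `0` for `f = ∅`). -/
def minD (f : Weight) : ℤ := f.min.getD 0

/-- The tally function `T_f : ℤ → ℤ`, the unique function with `T_f(a_r) = 1`
and `T_f(b+1) = T_f(b) + 1` if `f(b+1) = ×`, `T_f(b+1) = T_f(b) - 1` otherwise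
(given here in closed form). -/
noncomputable def tally (f : Weight) (b : ℤ) : ℤ :=
  1 + 2 * (((f ∩ Finset.Ioc (maxD f) b).card : ℤ) - ((f ∩ Finset.Ioc b (maxD f)).card : ℤ))
    - (b - maxD f)

/-- Any finite set of integers omits some integer of the form `a + 1 + n`. -/
theorem exists_free (T : Finset ℤ) (a : ℤ) : ∃ n : ℕ, a + 1 + (n : ℤ) ∉ T := by
  by_contra h
  push_neg at h
  have hinj : Function.Injective (fun n : ℕ => a + 1 + (n : ℤ)) := by
    intro m n hmn
    have : ((m : ℤ)) = (n : ℤ) := by simpa using hmn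
    exact_mod_cast this
  exact (Set.infinite_of_injective_forall_mem hinj (fun n => h n)) T.finite_toSet

/-- The end of the cap starting at `a`: the smallest integer greater than `a`
avoiding the (finite) forbidden set `T`. -/
def capEnd (T : Finset ℤ) (a : ℤ) : ℤ := a + 1 + (Nat.find (exists_free T a) : ℤ)

/-- Build the caps starting at the points of the given list (processed in order,
which will be right-to-left on the number line), where `S = f⁻¹(×)` and `used`
records the ends of the already-constructed caps.  A cap is encoded as a pair
`(start, end)` with `start < end`. -/
def buildCaps (S : Finset ℤ) : List ℤ → Finset ℤ → Finset (ℤ × ℤ)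
  | [], _ => ∅
  | a :: rest, used =>
      insert (a, capEnd (S ∪ used) a)
        (buildCaps S rest (insert (capEnd (S ∪ used) a) used))

/-- The cap diagram `D_cap(f)`: one cap starting at each entry of `f`,
constructed from right to left, each cap ending at the smallest integer greater
than its start that is not in `f⁻¹(×)` and not the end of an
already-constructed cap. -/
def Dcap (f : Weight) : Finset (ℤ × ℤ) :=
  buildCaps f ((f.sort (· ≤ ·)).reverse) ∅

/-- A set of caps `D` matches `f` if every cap of `D` joins an integer where
`f` takes the value `·` to an integer where `f` takes the value `×`. -/
def Matches (D : Finset (ℤ × ℤ)) (f : Weight) : Prop :=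
  ∀ c ∈ D, (c.1 ∈ f ∧ c.2 ∉ f) ∨ (c.1 ∉ f ∧ c.2 ∈ f)

/-- `♭f`: the set of `g ∈ F_r` (`r = #f`) such that `D_cap(g)` matches `f`. -/
def flat (f : Weight) : Set Weight :=
  {g | g.card = f.card ∧ Matches (Dcap g) f}

/-- `L^a_b f`: change the value of `f` at `a` from `×` to `·` and at `b`
from `·` to `×`. -/
def Lmove (f : Weight) (b a : ℤ) : Weight := insert b (f.erase a)

/-- The move `L^a_b f` is legal. -/
def IsLegal (f : Weight) (b a : ℤ) : Prop :=
  b < a ∧ b ∉ f ∧ a ∈ f ∧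
    (∀ x : ℤ, b ≤ x → x < a → 1 ≤ tally f a - tally f x) ∧
    tally f a - tally f b = 1

/-- `LM f = {i ∈ {1,…,r} : L^a_{a-1-2i} f is a legal move}`, where `a = a_r`. -/
def LM (f : Weight) : Set ℕ :=
  {i | 1 ≤ i ∧ i ≤ f.card ∧ IsLegal f (maxD f - 1 - 2 * (i : ℤ)) (maxD f)}

/-- `♭_{1/2} f`: those `g ∈ ♭f` whose cap diagram contains the cap joining
`a = a_r` to `a + 1`. -/
def flatHalf (f : Weight) : Set Weight :=
  {g | g ∈ flat f ∧ (maxD f, maxD f + 1) ∈ Dcap g}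

/-- `♭_i f = {L^a_{a-1-2i} h : h ∈ ♭_{1/2} f} ∩ ♭f`. -/
def flatI (f : Weight) (i : ℕ) : Set Weight :=
  ((fun h => Lmove h (maxD f - 1 - 2 * (i : ℤ)) (maxD f)) '' flatHalf f) ∩ flat f

/-- `max f`: integer points where `T_f` has a (strict) local maximum. -/
def maxSet (f : Weight) : Set ℤ :=
  {c | tally f (c - 1) < tally f c ∧ tally f (c + 1) < tally f c}

/-- `min f`: integer points where `T_f` has a (strict) local minimum. -/
def minSet (f : Weight) : Set ℤ :=
  {c | tally f c < tally f (c - 1) ∧ tally f c < tally f (c + 1)}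

/-- `f₊`: points where `T_f` increases on both sides. -/
def fplus (f : Weight) : Set ℤ :=
  {c | tally f c - tally f (c - 1) = 1 ∧ tally f (c + 1) - tally f c = 1}

/-- `f₋`: points where `T_f` decreases on both sides. -/
def fminus (f : Weight) : Set ℤ :=
  {c | tally f c - tally f (c - 1) = -1 ∧ tally f (c + 1) - tally f c = -1}

/-- `p = (2, 4, …, 2r)`. -/
noncomputable def pSet (r : ℕ) : Weight := (Finset.Icc (1 : ℤ) (r : ℤ)).image (fun x => 2 * x)

/-- `q = (1, 2, …, r)`. -/
noncomputable def qSet (r : ℕ) : Weight := Finset.Icc (1 : ℤ) (r : ℤ)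

end KacCatalan

namespace KacCatalan

theorem capEnd_not_mem (T : Finset ℤ) (a : ℤ) : capEnd T a ∉ T :=
  Nat.find_spec (exists_free T a)

theorem lt_capEnd (T : Finset ℤ) (a : ℤ) : a < capEnd T a := by
  have : (0:ℤ) ≤ (Nat.find (exists_free T a) : ℤ) := Int.natCast_nonneg _
  unfold capEnd; omega

theorem mem_of_lt_capEnd {T : Finset ℤ} {a c : ℤ} (h1 : a < c) (h2 : c < capEnd T a) :
    c ∈ T := by
  have hc : c = a + 1 + ((c - a - 1).toNat : ℤ) := by omega
  have hlt : (c - a - 1).toNat < Nat.find (exists_free T a) := by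
    unfold capEnd at h2; omega
  have := Nat.find_min (exists_free T a) hlt
  rw [← hc] at this
  exact not_not.mp this

theorem capEnd_eq {T : Finset ℤ} {a e : ℤ} (h1 : a < e) (h2 : e ∉ T)
    (h3 : ∀ c, a < c → c < e → c ∈ T) : capEnd T a = e := by
  rcases lt_trichotomy (capEnd T a) e with h | h | h
  · exact absurd (h3 _ (lt_capEnd T a) h) (capEnd_not_mem T a)
  · exact h
  · exact absurd (mem_of_lt_capEnd h1 h) h2

theorem fst_mem_of_mem_buildCaps {S : Finset ℤ} {L : List ℤ} {used : Finset ℤ} {p : ℤ × ℤ}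
    (h : p ∈ buildCaps S L used) : p.1 ∈ L := by
  induction L generalizing used with
  | nil => simp [buildCaps] at h
  | cons b L ih =>
    simp only [buildCaps, Finset.mem_insert] at h
    rcases h with h | h
    · simp [h]
    · exact List.mem_cons_of_mem _ (ih h)

theorem sort_insert_max {S : Finset ℤ} {a : ℤ} (h : ∀ x ∈ S, x < a) :
    (insert a S).sort (· ≤ ·) = S.sort (· ≤ ·) ++ [a] := by
  have hna : a ∉ S := fun hmem => absurd (h a hmem) (lt_irrefl a)
  have hperm : List.Perm ((insert a S).sort (· ≤ ·)) (S.sort (· ≤ ·) ++ [a]) :=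
    ((((Finset.sort_perm_toList (s := insert a S) (r := fun x y : ℤ => x ≤ y)).trans
      (Finset.toList_insert hna)).trans
      (List.Perm.cons a (Finset.sort_perm_toList (s := S) (r := fun x y : ℤ => x ≤ y)).symm)).trans
      (List.perm_append_singleton _ _).symm)
  have hsorted : List.Pairwise (· ≤ ·) (S.sort (· ≤ ·) ++ [a]) := by
    rw [List.pairwise_append]
    refine ⟨Finset.pairwise_sort (s := S) (r := fun x y : ℤ => x ≤ y), by simp, ?_⟩
    intro x hx y hy
    rw [List.mem_singleton] at hy
    subst hy
    exact le_of_lt (h x ((Finset.mem_sort _).mp hx))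
  exact List.Perm.eq_of_pairwise' (Finset.pairwise_sort (s := insert a S) (r := fun x y : ℤ => x ≤ y)) hsorted hperm

theorem maxD_spec {f : Finset ℤ} (h : f.Nonempty) :
    f.max.getD 0 ∈ f ∧ ∀ x ∈ f, x ≤ f.max.getD 0 := by
  obtain ⟨m, hm⟩ := Finset.max_of_nonempty h
  have hd : f.max.getD 0 = m := by rw [hm]; rfl
  rw [hd]
  refine ⟨Finset.mem_of_max hm, fun x hx => ?_⟩
  have := Finset.le_max hx
  rw [hm] at this
  exact_mod_cast this


def shiftEnd (a e : ℤ) : ℤ := if e < a then e else e + 2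

theorem mem_shifted_iff {a : ℤ} {g used : Finset ℤ} (hg : ∀ x ∈ g, x < a) (c : ℤ) :
    c ∈ insert a g ∪ insert (a + 1) (used.image (shiftEnd a)) ↔
      (c = a ∨ c = a + 1 ∨ (c < a ∧ c ∈ g ∪ used) ∨ (a + 2 ≤ c ∧ c - 2 ∈ used)) := by
  simp only [Finset.mem_union, Finset.mem_insert, Finset.mem_image]
  constructor
  · rintro ((rfl | hc) | (rfl | ⟨u, hu, he⟩))
    · tauto
    · have := hg c hc
      right; right; left; exact ⟨this, Or.inl hc⟩
    · tauto
    · by_cases hua : u < a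
      · rw [shiftEnd, if_pos hua] at he
        subst he
        right; right; left; exact ⟨hua, Or.inr hu⟩
      · rw [shiftEnd, if_neg hua] at he
        right; right; right
        refine ⟨by omega, ?_⟩
        rw [show c - 2 = u by omega]
        exact hu
  · rintro (rfl | rfl | ⟨hc, hcm⟩ | ⟨hc, hcm⟩)
    · exact Or.inl (Or.inl rfl)
    · exact Or.inr (Or.inl rfl)
    · rcases hcm with hcg | hcu
      · exact Or.inl (Or.inr hcg)
      · exact Or.inr (Or.inr ⟨c, hcu, by rw [shiftEnd, if_pos hc]⟩)
    · exact Or.inr (Or.inr ⟨c - 2, hcm, by rw [shiftEnd, if_neg (by omega)]; omega⟩)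

theorem capEnd_shift {a : ℤ} (g used : Finset ℤ) (hg : ∀ x ∈ g, x < a) {b : ℤ} (hb : b < a) :
    capEnd (insert a g ∪ insert (a + 1) (used.image (shiftEnd a))) b
      = shiftEnd a (capEnd (g ∪ used) b) := by
  set e := capEnd (g ∪ used) b with he
  have h1 : b < e := lt_capEnd _ _
  have h2 : e ∉ g ∪ used := capEnd_not_mem _ _
  have h2u : e ∉ used := fun h => h2 (Finset.mem_union_right _ h)
  have h3 : ∀ c, b < c → c < e → c ∈ g ∪ used := fun c hc1 hc2 => mem_of_lt_capEnd hc1 hc2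
  by_cases hea : e < a
  · rw [shiftEnd, if_pos hea]
    apply capEnd_eq h1
    · rw [mem_shifted_iff hg]
      push_neg
      exact ⟨by omega, by omega, fun _ => h2, by omega⟩
    · intro c hc1 hc2
      rw [mem_shifted_iff hg]
      exact Or.inr (Or.inr (Or.inl ⟨by omega, h3 c hc1 hc2⟩))
  · rw [shiftEnd, if_neg hea]
    apply capEnd_eq (by omega)
    · rw [mem_shifted_iff hg]
      push_neg
      exact ⟨by omega, by omega, fun h => absurd h (by omega), fun _ => by rw [show e + 2 - 2 = e by ring]; exact h2u⟩
    · intro c hc1 hc2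
      rw [mem_shifted_iff hg]
      by_cases hca : c < a
      · exact Or.inr (Or.inr (Or.inl ⟨hca, h3 c hc1 (by omega)⟩))
      · by_cases hca1 : c = a
        · exact Or.inl hca1
        · by_cases hca2 : c = a + 1
          · exact Or.inr (Or.inl hca2)
          · have hcc : a + 2 ≤ c := by omega
            have hmem : c - 2 ∈ g ∪ used := h3 (c - 2) (by omega) (by omega)
            rcases Finset.mem_union.mp hmem with hcg | hcu
            · exact absurd (hg _ hcg) (by omega)
            · exact Or.inr (Or.inr (Or.inr ⟨hcc, hcu⟩))

theorem buildCaps_insert_shift (a : ℤ) (g : Finset ℤ) (hg : ∀ x ∈ g, x < a) :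
    ∀ (L : List ℤ), (∀ x ∈ L, x < a) → ∀ used : Finset ℤ,
    buildCaps (insert a g) L (insert (a + 1) (used.image (shiftEnd a)))
      = (buildCaps g L used).image (Prod.map id (shiftEnd a)) := by
  intro L
  induction L with
  | nil => intro _ used; simp [buildCaps]
  | cons b L ih =>
    intro hL used
    have hb : b < a := hL b List.mem_cons_self
    have hce := capEnd_shift g used hg hb
    simp only [buildCaps]
    rw [hce, Finset.image_insert]
    have hins : insert (shiftEnd a (capEnd (g ∪ used) b))
        (insert (a + 1) (used.image (shiftEnd a)))
        = insert (a + 1) ((insert (capEnd (g ∪ used) b) used).image (shiftEnd a)) := by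
      rw [Finset.image_insert]
      rw [Finset.insert_comm]
    rw [hins, ih (fun x hx => hL x (List.mem_cons_of_mem _ hx)) (insert (capEnd (g ∪ used) b) used)]
    rfl


theorem Dcap_insert_max {g : Finset ℤ} {a : ℤ} (hg : ∀ x ∈ g, x < a) :
    Dcap (insert a g) = insert (a, a + 1) ((Dcap g).image (Prod.map id (shiftEnd a))) := by
  unfold Dcap
  rw [sort_insert_max hg, List.reverse_append]
  simp only [List.reverse_cons, List.reverse_nil, List.nil_append, List.singleton_append]
  simp only [buildCaps]
  have hend : capEnd (insert a g ∪ ∅) a = a + 1 := by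
    rw [Finset.union_empty]
    apply capEnd_eq (by omega)
    · simp only [Finset.mem_insert]
      push_neg
      exact ⟨by omega, fun h => absurd (hg _ h) (by omega)⟩
    · intro c h1 h2; exact absurd h1 (by omega)
  rw [hend]
  congr 1
  have := buildCaps_insert_shift a g hg ((g.sort (· ≤ ·)).reverse)
    (fun x hx => hg x ((Finset.mem_sort _).mp (List.mem_reverse.mp hx))) ∅
  simpa using this

theorem mem_Dcap_fst {S : Finset ℤ} {p : ℤ × ℤ} (h : p ∈ Dcap S) : p.1 ∈ S := by
  have := fst_mem_of_mem_buildCaps h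
  exact (Finset.mem_sort _).mp (List.mem_reverse.mp this)

theorem le_of_matches {S w : Weight} (hM : Matches (Dcap S) w) {c : ℤ}
    (hw : ∀ y ∈ w, y ≤ c) : ∀ x ∈ S, x ≤ c := by
  rcases Finset.eq_empty_or_nonempty S with rfl | hne
  · simp
  · obtain ⟨hbm, hble⟩ := maxD_spec hne
    set b := S.max.getD 0 with hb
    have hblt : ∀ x ∈ S.erase b, x < b := fun x hx =>
      lt_of_le_of_ne (hble x (Finset.mem_of_mem_erase hx)) (Finset.ne_of_mem_erase hx)
    have hcap : (b, b + 1) ∈ Dcap S := by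
      have hD := Dcap_insert_max hblt
      rw [Finset.insert_erase hbm] at hD
      rw [hD]
      exact Finset.mem_insert_self _ _
    have := hM _ hcap
    have hbc : b ≤ c := by
      rcases this with ⟨h1, _⟩ | ⟨_, h2⟩
      · exact hw _ h1
      · have := hw _ h2; omega
    exact fun x hx => le_trans (hble x hx) hbc

/-- **Lemma 1.** For `f = (a₁,…,a_r)`, `a = a_r` and `f̄ = (a₁,…,a_{r-1})`, the
map `g = (b₁,…,b_{r-1}) ↦ h = (b₁,…,b_{r-1},a)` is a bijection from `♭f̄` onto
`♭_{1/2} f`. -/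
theorem bijOn_flatHalf (r : ℕ) (hr : 1 ≤ r) (f : Weight) (hf : f.card = r) :
    Set.BijOn (fun g => insert (maxD f) g) (flat (f.erase (maxD f))) (flatHalf f) := by
  have hfne : f.Nonempty := Finset.card_pos.mp (by omega)
  obtain ⟨haf, hle⟩ : maxD f ∈ f ∧ ∀ x ∈ f, x ≤ maxD f := maxD_spec hfne
  set a := maxD f with ha
  have hflt : ∀ x ∈ f.erase a, x ≤ a - 1 := fun x hx => by
    have h1 := hle x (Finset.mem_of_mem_erase hx)
    have h2 := Finset.ne_of_mem_erase hx
    omega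
  have hcarde : (f.erase a).card = r - 1 := by rw [Finset.card_erase_of_mem haf, hf]
  -- elements of g ∈ flat (f.erase a) are < a
  have keyg : ∀ g ∈ flat (f.erase a), ∀ x ∈ g, x < a := by
    intro g hg x hx
    have := le_of_matches hg.2 hflt x hx
    omega
  -- elements of h matching f are ≤ a
  have keyh : ∀ h : Weight, Matches (Dcap h) f → ∀ x ∈ h, x ≤ a :=
    fun h hM => le_of_matches hM hle
  have hmemf : ∀ x : ℤ, x < a → (x ∈ f.erase a ↔ x ∈ f) := by
    intro x hx
    rw [Finset.mem_erase]
    constructor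
    · exact fun h => h.2
    · exact fun h => ⟨by omega, h⟩
  refine ⟨?_, ?_, ?_⟩
  · -- MapsTo
    intro g hg
    have hglt : ∀ x ∈ g, x < a := keyg g hg
    have hna : a ∉ g := fun h => absurd (hglt a h) (lt_irrefl a)
    have hD := Dcap_insert_max hglt
    have hcard : (insert a g).card = f.card := by
      rw [Finset.card_insert_of_notMem hna, hg.1, hcarde, hf]
      omega
    refine ⟨⟨hcard, ?_⟩, ?_⟩
    · intro c hc
      rw [hD] at hc
      rcases Finset.mem_insert.mp hc with rfl | hc
      · exact Or.inl ⟨haf, fun h => absurd (hle _ h) (by omega)⟩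
      · obtain ⟨⟨s, e⟩, hse, rfl⟩ := Finset.mem_image.mp hc
        have hs : s < a := hglt s (mem_Dcap_fst hse)
        have hmatch := hg.2 _ hse
        simp only [Prod.map, id_eq]
        by_cases hea : e < a
        · rw [shiftEnd, if_pos hea]
          rcases hmatch with ⟨h1, h2⟩ | ⟨h1, h2⟩
          · exact Or.inl ⟨(hmemf s hs).mp h1, fun hh => h2 ((hmemf e hea).mpr hh)⟩
          · exact Or.inr ⟨fun hh => h1 ((hmemf s hs).mpr hh), (hmemf e hea).mp h2⟩
        · rw [shiftEnd, if_neg hea]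
          have he2 : e + 2 ∉ f := fun h => absurd (hle _ h) (by omega)
          rcases hmatch with ⟨h1, _⟩ | ⟨_, h2⟩
          · exact Or.inl ⟨(hmemf s hs).mp h1, he2⟩
          · exact absurd (hflt _ h2) (by omega)
    · rw [hD]
      exact Finset.mem_insert_self _ _
  · -- InjOn
    intro g1 hg1 g2 hg2 heq
    have h1 : a ∉ g1 := fun h => absurd (keyg g1 hg1 a h) (lt_irrefl a)
    have h2 : a ∉ g2 := fun h => absurd (keyg g2 hg2 a h) (lt_irrefl a)
    have : (insert a g1).erase a = (insert a g2).erase a := by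
      simp only at heq
      rw [heq]
    rwa [Finset.erase_insert h1, Finset.erase_insert h2] at this
  · -- SurjOn
    intro h hh
    obtain ⟨⟨hcard, hM⟩, hcap⟩ := hh
    have hahm : a ∈ h := mem_Dcap_fst hcap
    have hhle : ∀ x ∈ h, x ≤ a := keyh h hM
    set g := h.erase a with hgdef
    have hglt : ∀ x ∈ g, x < a := fun x hx => by
      have h1 := hhle x (Finset.mem_of_mem_erase hx)
      have h2 := Finset.ne_of_mem_erase hx
      omega
    have hins : insert a g = h := Finset.insert_erase hahm
    have hD : Dcap h = insert (a, a + 1) ((Dcap g).image (Prod.map id (shiftEnd a))) := by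
      rw [← hins]
      exact Dcap_insert_max hglt
    have hgflat : g ∈ flat (f.erase a) := by
      constructor
      · rw [hgdef, Finset.card_erase_of_mem hahm, hcard, hcarde, hf]
      · intro c hc
        obtain ⟨s, e⟩ := c
        have hcmem : (s, shiftEnd a e) ∈ Dcap h := by
          rw [hD]
          exact Finset.mem_insert_of_mem (Finset.mem_image_of_mem _ hc)
        have hs : s < a := hglt s (mem_Dcap_fst hc)
        have hmatch := hM _ hcmem
        simp only at hmatch ⊢
        by_cases hea : e < a
        · rw [shiftEnd, if_pos hea] at hmatch
          rcases hmatch with ⟨h1, h2⟩ | ⟨h1, h2⟩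
          · exact Or.inl ⟨(hmemf s hs).mpr h1, fun hx => h2 ((hmemf e hea).mp hx)⟩
          · exact Or.inr ⟨fun hx => h1 ((hmemf s hs).mp hx), (hmemf e hea).mpr h2⟩
        · rw [shiftEnd, if_neg hea] at hmatch
          have he2 : e + 2 ∉ f := fun hx => absurd (hle _ hx) (by omega)
          have henf : e ∉ f.erase a := fun hx => absurd (hflt _ hx) (by omega)
          rcases hmatch with ⟨h1, _⟩ | ⟨_, h2⟩
          · exact Or.inl ⟨(hmemf s hs).mpr h1, henf⟩
          · exact absurd h2 he2
    exact ⟨g, hgflat, hins⟩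

end KacCatalan
end

section
/- Let r ≥ 1 and let p = (2, 4, …, 2r) ∈ F_r (so p⁻¹(×) = {2, 4, …, 2r}). Then |♭p| = C_{r+1}. -/
open Finset

namespace KacCatalan




/-- Balance function: `bal g x = 2|{y ∈ g : y ≤ x}| - x`. -/
def bal (g : Finset ℤ) (x : ℤ) : ℤ := 2 * ((g.filter (fun y => y ≤ x)).card : ℤ) - x

lemma bal_succ_mem {g : Finset ℤ} {x : ℤ} (h : x ∈ g) : bal g x = bal g (x - 1) + 1 := by
  have hf : g.filter (fun y => y ≤ x) = insert x (g.filter (fun y => y ≤ x - 1)) := by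
    ext y
    simp only [Finset.mem_filter, Finset.mem_insert]
    constructor
    · rintro ⟨hy, hyx⟩
      rcases eq_or_lt_of_le hyx with h' | h'
      · exact Or.inl h'
      · exact Or.inr ⟨hy, by omega⟩
    · rintro (rfl | ⟨hy, hyx⟩)
      · exact ⟨h, le_refl _⟩
      · exact ⟨hy, by omega⟩
  have hx : x ∉ g.filter (fun y => y ≤ x - 1) := by
    simp only [Finset.mem_filter]; omega
  rw [bal, bal, hf, Finset.card_insert_of_notMem hx]
  push_cast; ring

lemma bal_succ_not_mem {g : Finset ℤ} {x : ℤ} (h : x ∉ g) : bal g x = bal g (x - 1) - 1 := by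
  have hf : g.filter (fun y => y ≤ x) = g.filter (fun y => y ≤ x - 1) := by
    ext y
    simp only [Finset.mem_filter]
    constructor
    · rintro ⟨hy, hyx⟩
      refine ⟨hy, ?_⟩
      rcases eq_or_lt_of_le hyx with h' | h'
      · exact absurd (h' ▸ hy) h
      · omega
    · rintro ⟨hy, hyx⟩; exact ⟨hy, by omega⟩
  rw [bal, bal, hf]; ring

lemma bal_step (g : Finset ℤ) (x : ℤ) :
    bal g x = bal g (x - 1) + 1 ∨ bal g x = bal g (x - 1) - 1 := by
  by_cases h : x ∈ g
  · exact Or.inl (bal_succ_mem h)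
  · exact Or.inr (bal_succ_not_mem h)

lemma bal_add_self_even (g : Finset ℤ) (x : ℤ) : Even (bal g x + x) := by
  refine ⟨((g.filter (fun y => y ≤ x)).card : ℤ), ?_⟩
  rw [bal]; ring

lemma bal_le (g : Finset ℤ) (x : ℤ) : bal g x ≤ 2 * (g.card : ℤ) - x := by
  have := Finset.card_filter_le g (fun y => y ≤ x)
  have : ((g.filter (fun y => y ≤ x)).card : ℤ) ≤ (g.card : ℤ) := by exact_mod_cast this
  rw [bal]; omega

lemma fr_exists (g : Finset ℤ) (a : ℤ) : ∃ n : ℕ, bal g (a + 1 + (n : ℤ)) < bal g a := by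
  refine ⟨(2 * (g.card : ℤ) - bal g a - a).toNat, ?_⟩
  have h1 := bal_le g (a + 1 + ((2 * (g.card : ℤ) - bal g a - a).toNat : ℤ))
  have h2 : ((2 * (g.card : ℤ) - bal g a - a).toNat : ℤ) ≥ 2 * (g.card : ℤ) - bal g a - a :=
    Int.self_le_toNat _
  omega

/-- First return: the smallest `b > a` with `bal g b < bal g a`. -/
def fr (g : Finset ℤ) (a : ℤ) : ℤ := a + 1 + (Nat.find (fr_exists g a) : ℤ)

lemma lt_fr (g : Finset ℤ) (a : ℤ) : a < fr g a := by
  have : (0 : ℤ) ≤ (Nat.find (fr_exists g a) : ℤ) := Int.natCast_nonneg _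
  rw [fr]; omega

lemma bal_fr_lt (g : Finset ℤ) (a : ℤ) : bal g (fr g a) < bal g a := Nat.find_spec (fr_exists g a)

lemma fr_min {g : Finset ℤ} {a x : ℤ} (h1 : a ≤ x) (h2 : x < fr g a) : bal g a ≤ bal g x := by
  rcases eq_or_lt_of_le h1 with rfl | h1
  · exact le_refl _
  · have hm : x = a + 1 + ((x - a - 1).toNat : ℤ) := by omega
    have hlt : (x - a - 1).toNat < Nat.find (fr_exists g a) := by
      rw [fr] at h2; omega
    have := Nat.find_min (fr_exists g a) hlt
    rw [← hm] at this
    omega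

lemma fr_unique {g : Finset ℤ} {a b : ℤ} (hab : a < b) (hb : bal g b < bal g a)
    (hmin : ∀ x, a < x → x < b → bal g a ≤ bal g x) : fr g a = b := by
  have hle : fr g a ≤ b := by
    have : Nat.find (fr_exists g a) ≤ (b - a - 1).toNat := by
      apply Nat.find_le
      have : a + 1 + ((b - a - 1).toNat : ℤ) = b := by omega
      rw [this]; exact hb
    rw [fr]; omega
  rcases eq_or_lt_of_le hle with h | h
  · exact h
  · exact absurd (hmin _ (lt_fr g a) h) (not_le.mpr (bal_fr_lt g a))

lemma bal_fr_eq (g : Finset ℤ) (a : ℤ) : bal g (fr g a) = bal g a - 1 := by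
  have h1 := bal_fr_lt g a
  have h2 : bal g a ≤ bal g (fr g a - 1) := fr_min (by have := lt_fr g a; omega) (by omega)
  rcases bal_step g (fr g a) with h | h <;> omega

lemma fr_not_mem (g : Finset ℤ) (a : ℤ) : fr g a ∉ g := by
  intro h
  have h1 := bal_succ_mem h
  have h2 : bal g a ≤ bal g (fr g a - 1) := fr_min (by have := lt_fr g a; omega) (by omega)
  have h3 := bal_fr_lt g a
  omega

lemma fr_ne_fr {g : Finset ℤ} {a a' : ℤ} (h : a < a') (ha' : a' ∈ g) : fr g a' ≠ fr g a := by
  rcases lt_trichotomy a' (fr g a) with hc | hc | hc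
  · have h1 : bal g a ≤ bal g (a' - 1) := fr_min (by omega) (by omega)
    have h2 := bal_succ_mem ha'
    have h3 := bal_fr_eq g a'
    have h4 := bal_fr_eq g a
    intro heq
    rw [heq] at h3
    omega
  · exact absurd (hc ▸ ha') (fr_not_mem g a)
  · have := lt_fr g a'
    omega

lemma fr_injOn {g : Finset ℤ} {a a' : ℤ} (ha : a ∈ g) (ha' : a' ∈ g)
    (h : fr g a = fr g a') : a = a' := by
  rcases lt_trichotomy a a' with hc | hc | hc
  · exact absurd h.symm (fr_ne_fr hc ha')
  · exact hc
  · exact absurd h (fr_ne_fr hc ha)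

lemma ivt (g : Finset ℤ) : ∀ (n : ℕ) (a t : ℤ), bal g a ≤ t → t ≤ bal g (a + n) →
    ∃ y, a ≤ y ∧ y ≤ a + n ∧ bal g y = t := by
  intro n
  induction n with
  | zero =>
    intro a t h1 h2
    have ha : a + ((0:ℕ):ℤ) = a := by push_cast; ring
    rw [ha] at h2
    exact ⟨a, le_refl _, by omega, by omega⟩
  | succ n ih =>
    intro a t h1 h2
    by_cases h : t ≤ bal g (a + n)
    · obtain ⟨y, hy1, hy2, hy3⟩ := ih a t h1 h
      exact ⟨y, hy1, by push_cast; omega, hy3⟩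
    · push_neg at h
      have hstep := bal_step g (a + (n + 1 : ℕ))
      have hcast : a + ((n + 1 : ℕ) : ℤ) - 1 = a + (n : ℤ) := by push_cast; ring
      rw [hcast] at hstep
      refine ⟨a + ((n + 1 : ℕ) : ℤ), by push_cast; omega, le_refl _, by omega⟩

lemma ivt' {g : Finset ℤ} {a b t : ℤ} (hab : a ≤ b) (h1 : bal g a ≤ t) (h2 : t ≤ bal g b) :
    ∃ y, a ≤ y ∧ y ≤ b ∧ bal g y = t := by
  have hb : b = a + ((b - a).toNat : ℤ) := by omega
  obtain ⟨y, hy1, hy2, hy3⟩ := ivt g (b - a).toNat a t h1 (by rw [← hb]; exact h2)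
  exact ⟨y, hy1, by omega, hy3⟩


lemma exists_fr_eq {g : Finset ℤ} {a x : ℤ} (hax : a < x) (hxf : x < fr g a) (hx : x ∉ g) :
    ∃ a', a' ∈ g ∧ a < a' ∧ a' < x ∧ fr g a' = x := by
  have hbx : bal g a ≤ bal g x := fr_min (by omega) hxf
  have hx1 : bal g (x - 1) = bal g x + 1 := by
    have := bal_succ_not_mem hx; omega
  set Z := (Finset.Icc a (x - 1)).filter (fun y => bal g y = bal g x) with hZ
  have hne : Z.Nonempty := by
    obtain ⟨y, h1, h2, h3⟩ := ivt' (show a ≤ x - 1 by omega) hbx (show bal g x ≤ bal g (x-1) by omega)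
    exact ⟨y, by simp only [hZ, Finset.mem_filter, Finset.mem_Icc]; exact ⟨⟨h1, h2⟩, h3⟩⟩
  set z := Z.max' hne with hz
  have hzZ : z ∈ Z := Z.max'_mem hne
  simp only [hZ, Finset.mem_filter, Finset.mem_Icc] at hzZ
  obtain ⟨⟨hza, hzx⟩, hbz⟩ := hzZ
  have hzne : z ≠ x - 1 := by intro h; rw [h] at hbz; omega
  have ha'g : z + 1 ∈ g := by
    by_contra hng
    have hs : bal g (z + 1) = bal g z - 1 := by
      have h := bal_succ_not_mem hng
      have h2 : z + 1 - 1 = z := by ring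
      rw [h2] at h; omega
    obtain ⟨y, hy1, hy2, hy3⟩ := ivt' (show z + 1 ≤ x - 1 by omega)
      (show bal g (z+1) ≤ bal g x by omega) (show bal g x ≤ bal g (x-1) by omega)
    have hyZ : y ∈ Z := by
      simp only [hZ, Finset.mem_filter, Finset.mem_Icc]; exact ⟨⟨by omega, hy2⟩, hy3⟩
    have := Z.le_max' y hyZ
    omega
  have hbz1 : bal g (z + 1) = bal g x + 1 := by
    have h := bal_succ_mem ha'g
    have h2 : z + 1 - 1 = z := by ring
    rw [h2] at h; omega
  refine ⟨z + 1, ha'g, by omega, by omega, ?_⟩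
  apply fr_unique (show z + 1 < x by omega) (by omega)
  intro y hy1 hy2
  by_contra hlt
  push_neg at hlt
  obtain ⟨y', h1', h2', h3'⟩ := ivt' (show y ≤ x - 1 by omega)
    (show bal g y ≤ bal g x by omega) (show bal g x ≤ bal g (x-1) by omega)
  have hyZ : y' ∈ Z := by
    simp only [hZ, Finset.mem_filter, Finset.mem_Icc]; exact ⟨⟨by omega, h2'⟩, h3'⟩
  have := Z.le_max' y' hyZ
  omega

lemma capEnd_unique {T : Finset ℤ} {a b : ℤ} (hab : a < b) (hb : b ∉ T)
    (hmem : ∀ x, a < x → x < b → x ∈ T) : capEnd T a = b := by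
  have hle : capEnd T a ≤ b := by
    have hfind : Nat.find (exists_free T a) ≤ (b - a - 1).toNat := by
      apply Nat.find_le
      have : a + 1 + ((b - a - 1).toNat : ℤ) = b := by omega
      rw [this]; exact hb
    rw [capEnd]; omega
  rcases eq_or_lt_of_le hle with h | h
  · exact h
  · have h1 : a < capEnd T a := by
      have : (0 : ℤ) ≤ (Nat.find (exists_free T a) : ℤ) := Int.natCast_nonneg _
      rw [capEnd]; omega
    have h2 : capEnd T a ∉ T := Nat.find_spec (exists_free T a)
    exact absurd (hmem _ h1 h) h2

lemma capEnd_eq_fr {g : Finset ℤ} {a : ℤ} (ha : a ∈ g) :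
    capEnd (g ∪ (g.filter (fun y => a < y)).image (fr g)) a = fr g a := by
  apply capEnd_unique (lt_fr g a)
  · intro hmem
    rcases Finset.mem_union.mp hmem with h | h
    · exact fr_not_mem g a h
    · obtain ⟨a', ha', heq⟩ := Finset.mem_image.mp h
      obtain ⟨ha'g, haa'⟩ := Finset.mem_filter.mp ha'
      have := fr_injOn ha'g ha heq
      omega
  · intro x hx1 hx2
    by_cases hxg : x ∈ g
    · exact Finset.mem_union_left _ hxg
    · obtain ⟨a', ha'g, h1, h2, h3⟩ := exists_fr_eq hx1 hx2 hxg
      exact Finset.mem_union_right _ (Finset.mem_image.mpr ⟨a', Finset.mem_filter.mpr ⟨ha'g, h1⟩, h3⟩)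

lemma sort_max_cons {T : Finset ℤ} (hne : T.Nonempty) :
    (T.sort (· ≤ ·)).reverse =
      T.max' hne :: ((T.erase (T.max' hne)).sort (· ≤ ·)).reverse := by
  set m := T.max' hne with hm
  have key : T.sort (· ≤ ·) = (T.erase m).sort (· ≤ ·) ++ [m] := by
    set l := (T.erase m).sort (· ≤ ·) ++ [m] with hl
    have hnd : l.Nodup := by
      rw [hl, List.nodup_append]
      refine ⟨Finset.sort_nodup _ _, List.nodup_singleton _, ?_⟩
      intro x hx
      rw [Finset.mem_sort] at hx
      simp only [List.mem_singleton]
      intro y hy h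
      rw [hy] at h
      rw [h] at hx
      exact (Finset.notMem_erase m T) hx
    have hsorted : l.Pairwise (· ≤ ·) := by
      rw [hl, List.pairwise_append]
      refine ⟨Finset.pairwise_sort _ _, List.pairwise_singleton _ _, ?_⟩
      intro x hx y hy
      rw [Finset.mem_sort] at hx
      rw [List.mem_singleton] at hy
      subst hy
      exact T.le_max' x (Finset.mem_of_mem_erase hx)
    have htf : l.toFinset = T := by
      rw [hl, List.toFinset_append, Finset.sort_toFinset]
      simp only [List.toFinset_cons, List.toFinset_nil, LawfulSingleton.insert_empty_eq]
      rw [Finset.union_comm, ← Finset.insert_eq]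
      exact Finset.insert_erase (T.max'_mem hne)
    have := (List.toFinset_sort (· ≤ ·) hnd).mpr hsorted
    rw [htf] at this
    exact this
  rw [key, List.reverse_append]
  simp

lemma buildCaps_eq (g : Finset ℤ) : ∀ (n : ℕ) (T : Finset ℤ), T.card = n → T ⊆ g →
    (∀ x ∈ g, x ∉ T → ∀ y ∈ T, y < x) →
    buildCaps g ((T.sort (· ≤ ·)).reverse) ((g \ T).image (fr g)) =
      T.image (fun a => (a, fr g a)) := by
  intro n
  induction n with
  | zero =>
    intro T hcard _ _
    rw [Finset.card_eq_zero] at hcard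
    subst hcard
    simp [buildCaps]
  | succ n ih =>
    intro T hcard hsub hyp
    have hne : T.Nonempty := Finset.card_pos.mp (by omega)
    set m := T.max' hne with hm
    have hmT : m ∈ T := T.max'_mem hne
    have hmg : m ∈ g := hsub hmT
    have hdiff : g \ T = g.filter (fun y => m < y) := by
      ext x
      simp only [Finset.mem_sdiff, Finset.mem_filter]
      constructor
      · rintro ⟨hxg, hxT⟩
        exact ⟨hxg, hyp x hxg hxT m hmT⟩
      · rintro ⟨hxg, hmx⟩
        refine ⟨hxg, fun hxT => ?_⟩
        exact absurd (T.le_max' x hxT) (by omega)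
    rw [sort_max_cons hne, buildCaps]
    rw [hdiff, capEnd_eq_fr hmg]
    have hins : insert (fr g m) ((g.filter (fun y => m < y)).image (fr g)) =
        (g \ T.erase m).image (fr g) := by
      rw [Finset.sdiff_erase hmg, Finset.image_insert, hdiff]
    rw [hins, ih (T.erase m) (by rw [Finset.card_erase_of_mem hmT]; omega)
      ((Finset.erase_subset _ _).trans hsub) ?hyp']
    · rw [← hm]
      conv_rhs => rw [← Finset.insert_erase hmT, Finset.image_insert]
    case hyp' =>
      intro x hxg hxT y hyT
      by_cases hxTT : x ∈ T
      · have hxm : x = m := by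
          by_contra hne'
          exact hxT (Finset.mem_erase.mpr ⟨hne', hxTT⟩)
        subst hxm
        have := T.le_max' y (Finset.mem_of_mem_erase hyT)
        have hy : y ≠ m := (Finset.mem_erase.mp hyT).1
        omega
      · exact hyp x hxg hxTT y (Finset.mem_of_mem_erase hyT)

lemma Dcap_eq (g : Finset ℤ) : Dcap g = g.image (fun a => (a, fr g a)) := by
  rw [Dcap]
  have := buildCaps_eq g g.card g rfl (le_refl _) (fun x hx hnx _ _ => absurd hx hnx)
  rwa [Finset.sdiff_self, Finset.image_empty] at this
lemma mem_pSet {r : ℕ} {x : ℤ} : x ∈ pSet r ↔ 2 ≤ x ∧ x ≤ 2 * (r : ℤ) ∧ Even x := by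
  rw [pSet, Finset.mem_image]
  constructor
  · rintro ⟨i, hi, rfl⟩
    rw [Finset.mem_Icc] at hi
    exact ⟨by omega, by omega, ⟨i, by ring⟩⟩
  · rintro ⟨h1, h2, ⟨i, rfl⟩⟩
    exact ⟨i, Finset.mem_Icc.mpr ⟨by omega, by omega⟩, by ring⟩

lemma pSet_card (r : ℕ) : (pSet r).card = r := by
  rw [pSet, Finset.card_image_of_injective _ (fun x y h => by omega)]
  rw [Int.card_Icc]
  omega

lemma mem_flat_iff {f g : Weight} :
    g ∈ flat f ↔ g.card = f.card ∧
      ∀ a ∈ g, (a ∈ f ∧ fr g a ∉ f) ∨ (a ∉ f ∧ fr g a ∈ f) := by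
  rw [flat, Set.mem_setOf_eq, Matches, Dcap_eq]
  constructor
  · rintro ⟨h1, h2⟩
    refine ⟨h1, fun a ha => h2 (a, fr g a) (Finset.mem_image.mpr ⟨a, ha, rfl⟩)⟩
  · rintro ⟨h1, h2⟩
    refine ⟨h1, fun c hc => ?_⟩
    obtain ⟨a, ha, rfl⟩ := Finset.mem_image.mp hc
    exact h2 a ha

lemma fr_parity (g : Finset ℤ) (a : ℤ) : (fr g a) % 2 = (a + 1) % 2 := by
  have h1 : (bal g a + a) % 2 = 0 := Int.even_iff.mp (bal_add_self_even g a)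
  have h2 : (bal g (fr g a) + fr g a) % 2 = 0 := Int.even_iff.mp (bal_add_self_even g (fr g a))
  have h3 := bal_fr_eq g a
  omega

/-- The explicit characterization of `♭(pSet r)`. -/
theorem flat_pSet_eq (r : ℕ) :
    flat (pSet r) = {g : Weight | g.card = r ∧ (∀ a ∈ g, 1 ≤ a ∧ a ≤ 2 * (r : ℤ)) ∧
      ∀ x : ℤ, 0 ≤ x → x ≤ 2 * (r : ℤ) → -1 ≤ bal g x} := by
  ext g
  rw [mem_flat_iff, pSet_card, Set.mem_setOf_eq]
  constructor
  · rintro ⟨hcard, hmatch⟩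
    -- even endpoints lie in pSet
    have hev : ∀ a ∈ g, (a % 2 = 0 → (2 ≤ a ∧ a ≤ 2 * (r : ℤ))) ∧
        (a % 2 = 1 → (2 ≤ fr g a ∧ fr g a ≤ 2 * (r : ℤ))) := by
      intro a ha
      have hfp := fr_parity g a
      rcases hmatch a ha with ⟨h1, h2⟩ | ⟨h1, h2⟩
      · rw [mem_pSet] at h1
        rw [mem_pSet] at h2
        have ha2 := Int.even_iff.mp h1.2.2
        constructor
        · intro _; exact ⟨h1.1, h1.2.1⟩
        · intro h; omega
      · rw [mem_pSet] at h2
        rw [mem_pSet] at h1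
        have ha2 := Int.even_iff.mp h2.2.2
        constructor
        · intro h
          exfalso
          exact h1 ⟨by omega, by omega, Int.even_iff.mpr h⟩
        · intro _; exact ⟨h2.1, h2.2.1⟩
    -- lower bound
    have hlow : ∀ a ∈ g, 1 ≤ a := by
      intro a ha
      by_contra hlt
      push_neg at hlt
      rcases Int.even_or_odd a with he | ho
      · have := (hev a ha).1 (Int.even_iff.mp he)
        omega
      · have hfr := (hev a ha).2 (Int.odd_iff.mp ho)
        have h0g : (0 : ℤ) ∉ g := by
          intro h0
          have := (hev 0 h0).1 (by omega)
          omega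
        have hodd := Int.odd_iff.mp ho
        obtain ⟨a', ha'g, h1, h2, h3⟩ := exists_fr_eq (show a < 0 by omega)
          (show (0:ℤ) < fr g a by omega) h0g
        rcases Int.even_or_odd a' with he' | ho'
        · have := (hev a' ha'g).1 (Int.even_iff.mp he')
          omega
        · have := (hev a' ha'g).2 (Int.odd_iff.mp ho')
          have := lt_fr g a'
          omega
    -- the "even endpoint" injection
    set ev : ℤ → ℤ := fun a => if a % 2 = 0 then a else fr g a with hevdef
    have hevmem : ∀ a ∈ g, ev a ∈ pSet r ∧ a ≤ ev a := by
      intro a ha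
      rw [hevdef]
      rcases Int.even_or_odd a with he | ho
      · have h := (hev a ha).1 (Int.even_iff.mp he)
        simp only [Int.even_iff.mp he, if_true]
        exact ⟨mem_pSet.mpr ⟨h.1, h.2, he⟩, le_refl _⟩
      · have h := (hev a ha).2 (Int.odd_iff.mp ho)
        have hne : ¬ (a % 2 = 0) := by have := Int.odd_iff.mp ho; omega
        simp only [hne, if_false]
        have hfp := fr_parity g a
        have := lt_fr g a
        exact ⟨mem_pSet.mpr ⟨h.1, h.2, Int.even_iff.mpr (by have := Int.odd_iff.mp ho; omega)⟩,
          by omega⟩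
    have hinj : ∀ a ∈ g, ∀ b ∈ g, ev a = ev b → a = b := by
      intro a ha b hb hab
      rw [hevdef] at hab
      simp only at hab
      by_cases h1 : a % 2 = 0 <;> by_cases h2 : b % 2 = 0 <;>
        simp only [h1, h2, if_true, if_false] at hab
      · exact hab
      · exact absurd (hab ▸ ha) (fr_not_mem g b)
      · exact absurd (hab.symm ▸ hb) (fr_not_mem g a)
      · exact fr_injOn ha hb hab
    -- pigeonhole bound
    have hpig : ∀ t : ℤ, 0 ≤ t → t ≤ (r : ℤ) →
        ((g.filter (fun a => 2 * t < a)).card : ℤ) ≤ (r : ℤ) - t := by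
      intro t ht0 htr
      have hmaps : ∀ a ∈ g.filter (fun a => 2 * t < a), ev a ∈ (pSet r).filter (fun x => 2 * t < x) := by
        intro a ha
        obtain ⟨hag, hat⟩ := Finset.mem_filter.mp ha
        obtain ⟨h1, h2⟩ := hevmem a hag
        exact Finset.mem_filter.mpr ⟨h1, by omega⟩
      have hcle : (g.filter (fun a => 2 * t < a)).card ≤
          ((pSet r).filter (fun x => 2 * t < x)).card := by
        apply Finset.card_le_card_of_injOn ev hmaps
        intro a ha b hb hab
        exact hinj a (Finset.mem_filter.mp ha).1 b (Finset.mem_filter.mp hb).1 hab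
      have hP : ((pSet r).filter (fun x => 2 * t < x)) =
          (Finset.Icc (t + 1) (r : ℤ)).image (fun x => 2 * x) := by
        ext x
        simp only [Finset.mem_filter, mem_pSet, Finset.mem_image, Finset.mem_Icc]
        constructor
        · rintro ⟨⟨h1, h2, ⟨i, rfl⟩⟩, h3⟩
          exact ⟨i, ⟨by omega, by omega⟩, by ring⟩
        · rintro ⟨i, ⟨hi1, hi2⟩, rfl⟩
          exact ⟨⟨by omega, by omega, ⟨i, by ring⟩⟩, by omega⟩
      have hPcard : ((pSet r).filter (fun x => 2 * t < x)).card = ((r : ℤ) - t).toNat := by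
        rw [hP, Finset.card_image_of_injective _ (fun x y h => by omega), Int.card_Icc]
        congr 1
        omega
      rw [hPcard] at hcle
      have := (Int.toNat_of_nonneg (show (0:ℤ) ≤ (r:ℤ) - t by omega))
      omega
    have hup : ∀ a ∈ g, a ≤ 2 * (r : ℤ) := by
      intro a ha
      by_contra hgt
      push_neg at hgt
      have h1 := hpig (r : ℤ) (by positivity) (le_refl _)
      have h2 : a ∈ g.filter (fun a => 2 * (r : ℤ) < a) := Finset.mem_filter.mpr ⟨ha, hgt⟩
      have := Finset.card_pos.mpr ⟨a, h2⟩
      omega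
    refine ⟨hcard, fun a ha => ⟨hlow a ha, hup a ha⟩, ?_⟩
    -- balance bound
    have hbal_even : ∀ t : ℤ, 0 ≤ t → t ≤ (r : ℤ) → 0 ≤ bal g (2 * t) := by
      intro t ht0 htr
      have hsplit := Finset.card_filter_add_card_filter_not
        (s := g) (p := fun a => a ≤ 2 * t)
      have heq : g.filter (fun a => ¬ a ≤ 2 * t) = g.filter (fun a => 2 * t < a) := by
        apply Finset.filter_congr
        intro x _
        simp [not_le]
      rw [heq] at hsplit
      have h1 := hpig t ht0 htr
      rw [bal]
      omega
    intro x hx0 hxr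
    rcases Int.even_or_odd x with ⟨t, rfl⟩ | ho
    · have := hbal_even t (by omega) (by omega)
      have h2 : t + t = 2 * t := by ring
      rw [h2] at *
      omega
    · have hstep := bal_step g (x + 1)
      have hx1 : x + 1 - 1 = x := by ring
      rw [hx1] at hstep
      have hodd := Int.odd_iff.mp ho
      obtain ⟨t, ht⟩ : ∃ t : ℤ, x + 1 = 2 * t := ⟨(x+1)/2, by omega⟩
      have := hbal_even t (by omega) (by omega)
      rw [← ht] at this
      omega
  · rintro ⟨hcard, hbd, hbal⟩
    refine ⟨hcard, fun a ha => ?_⟩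
    obtain ⟨ha1, ha2⟩ := hbd a ha
    have hfp := fr_parity g a
    have hfgt := lt_fr g a
    rcases Int.even_or_odd a with he | ho
    · left
      have hae := Int.even_iff.mp he
      refine ⟨mem_pSet.mpr ⟨by omega, ha2, he⟩, ?_⟩
      rw [mem_pSet]
      rintro ⟨-, -, hfre⟩
      have := Int.even_iff.mp hfre
      omega
    · right
      have hao := Int.odd_iff.mp ho
      constructor
      · rw [mem_pSet]
        rintro ⟨-, -, hae⟩
        have := Int.even_iff.mp hae
        omega
      · -- fr g a ∈ pSet r
        have hbal2r : bal g (2 * (r : ℤ)) = 0 := by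
          have hfull : g.filter (fun y => y ≤ 2 * (r : ℤ)) = g := by
            apply Finset.filter_true_of_mem
            intro x hx
            exact (hbd x hx).2
          rw [bal, hfull, hcard]
          ring
        have hbala : 1 ≤ bal g a := by
          have h1 := bal_succ_mem ha
          have h2 := hbal (a - 1) (by omega) (by omega)
          have h3 := Int.even_iff.mp (bal_add_self_even g a)
          omega
        have hfle : fr g a ≤ 2 * (r : ℤ) := by
          by_contra hgt
          push_neg at hgt
          have := fr_min (g := g) (a := a) (x := 2 * (r : ℤ)) (by omega) (by omega)
          omega
        exact mem_pSet.mpr ⟨by omega, hfle, Int.even_iff.mpr (by omega)⟩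
/-- The explicit "good" set: `g ⊆ [1, 2r]`, `|g| = r`, staircase condition. -/
def Sgood (r : ℕ) : Set Weight :=
  {g : Weight | g.card = r ∧ (∀ a ∈ g, 1 ≤ a ∧ a ≤ 2 * (r : ℤ)) ∧
    ∀ x : ℤ, 0 ≤ x → x ≤ 2 * (r : ℤ) → -1 ≤ bal g x}

/-- The Dyck word associated to `g`: `U` at position `0` and at the positions of `g`. -/
def dyckList (r : ℕ) (g : Finset ℤ) : List DyckStep :=
  (List.range (2 * r + 2)).map
    (fun (j : ℕ) => if ((j : ℕ) : ℤ) ∈ insert (0 : ℤ) g then DyckStep.U else DyckStep.D)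

lemma dyckList_length (r : ℕ) (g : Finset ℤ) : (dyckList r g).length = 2 * r + 2 := by
  simp [dyckList]

lemma count_U_add_count_D (l : List DyckStep) :
    l.count DyckStep.U + l.count DyckStep.D = l.length := by
  induction l with
  | nil => simp
  | cons a l ih =>
    cases a <;> simp [List.count_cons, ih] <;> omega

lemma count_U_map_range (P : ℕ → Prop) [DecidablePred P] (n : ℕ) :
    ((List.range n).map (fun j => if P j then DyckStep.U else DyckStep.D)).count DyckStep.U
      = ((Finset.range n).filter P).card := by
  induction n with
  | zero => simp
  | succ n ih =>
    rw [List.range_succ, List.map_append, List.count_append, Finset.range_add_one,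
      Finset.filter_insert]
    by_cases h : P n
    · rw [if_pos h, Finset.card_insert_of_notMem (by simp)]
      simp [h, ih]
    · rw [if_neg h]
      simp [h, ih]

lemma filter_range_card {g : Finset ℤ} (hg : ∀ a ∈ g, 1 ≤ a) (m : ℕ) :
    ((Finset.range m).filter (fun j => ((j : ℕ) : ℤ) ∈ g)).card
      = (g.filter (fun y => y ≤ (m : ℤ) - 1)).card := by
  refine Finset.card_bij' (fun j _ => ((j : ℕ) : ℤ)) (fun y _ => y.toNat) ?_ ?_ ?_ ?_
  · intro a ha
    obtain ⟨h1, h2⟩ := Finset.mem_filter.mp ha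
    rw [Finset.mem_range] at h1
    exact Finset.mem_filter.mpr ⟨h2, by omega⟩
  · intro y hy
    obtain ⟨h1, h2⟩ := Finset.mem_filter.mp hy
    have hy1 := hg y h1
    refine Finset.mem_filter.mpr ⟨Finset.mem_range.mpr (by omega), ?_⟩
    rw [Int.toNat_of_nonneg (by omega)]
    exact h1
  · intro a _
    simp
  · intro y hy
    obtain ⟨h1, _⟩ := Finset.mem_filter.mp hy
    have := hg y h1
    exact Int.toNat_of_nonneg (by omega)

lemma count_U_take {r : ℕ} {g : Finset ℤ} (hg : ∀ a ∈ g, 1 ≤ a) {i : ℕ} (hi : 1 ≤ i)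
    (hin : i ≤ 2 * r + 2) :
    ((dyckList r g).take i).count DyckStep.U = 1 + (g.filter (fun y => y ≤ (i : ℤ) - 1)).card := by
  have htake : (dyckList r g).take i = (List.range i).map
      (fun (j : ℕ) => if ((j : ℕ) : ℤ) ∈ insert (0 : ℤ) g then DyckStep.U else DyckStep.D) := by
    rw [dyckList, ← List.map_take, List.take_range, min_eq_left hin]
  rw [htake, count_U_map_range]
  have hins : (Finset.range i).filter (fun j => ((j : ℕ) : ℤ) ∈ insert (0 : ℤ) g)
      = insert 0 ((Finset.range i).filter (fun j => ((j : ℕ) : ℤ) ∈ g)) := by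
    ext j
    simp only [Finset.mem_filter, Finset.mem_insert, Finset.mem_range]
    constructor
    · rintro ⟨h1, h2 | h3⟩
      · left; omega
      · right; exact ⟨h1, h3⟩
    · rintro (rfl | ⟨h1, h2⟩)
      · exact ⟨by omega, Or.inl (by norm_num)⟩
      · exact ⟨h1, Or.inr h2⟩
  rw [hins, Finset.card_insert_of_notMem (by
    simp only [Finset.mem_filter, Finset.mem_range, not_and]
    intro _
    push_cast
    intro h0
    have := hg 0 h0
    omega), filter_range_card hg]
  omega

lemma bal_top {r : ℕ} {g : Finset ℤ} (hcard : g.card = r)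
    (hbd : ∀ a ∈ g, 1 ≤ a ∧ a ≤ 2 * (r : ℤ)) : bal g (2 * (r : ℤ)) = 0 := by
  have hfull : g.filter (fun y => y ≤ 2 * (r : ℤ)) = g :=
    Finset.filter_true_of_mem (fun x hx => (hbd x hx).2)
  rw [bal, hfull, hcard]
  ring

lemma prefix_count {r : ℕ} {g : Finset ℤ} (hg : g ∈ Sgood r) (i : ℕ) :
    ((dyckList r g).take i).count DyckStep.D ≤ ((dyckList r g).take i).count DyckStep.U := by
  obtain ⟨hcard, hbd, hbal⟩ := hg
  rcases Nat.eq_zero_or_pos i with rfl | hi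
  · simp
  set m := min i (2 * r + 2) with hm
  have htake : (dyckList r g).take i = (dyckList r g).take m := by
    rcases le_or_gt i (2 * r + 2) with h | h
    · rw [hm, min_eq_left h]
    · rw [List.take_of_length_le (by rw [dyckList_length]; omega),
        List.take_of_length_le (by rw [dyckList_length]; omega)]
  have hm1 : 1 ≤ m := by omega
  have hm2 : m ≤ 2 * r + 2 := by omega
  rw [htake]
  have hU := count_U_take (r := r) (fun a ha => (hbd a ha).1) hm1 hm2
  have hlen : ((dyckList r g).take m).length = m := by
    rw [List.length_take, dyckList_length]
    omega
  have hUD := count_U_add_count_D ((dyckList r g).take m)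
  rw [hlen] at hUD
  -- need: m ≤ 2 * count U, i.e. -1 ≤ bal g (m - 1)
  have hblast : -1 ≤ bal g ((m : ℤ) - 1) := by
    rcases le_or_gt ((m : ℤ) - 1) (2 * (r : ℤ)) with h | h
    · exact hbal _ (by omega) h
    · have hmeq : (m : ℤ) - 1 = 2 * (r : ℤ) + 1 := by omega
      have hnot : (2 * (r : ℤ) + 1) ∉ g := by
        intro hmem
        have := (hbd _ hmem).2
        omega
      have hstep := bal_succ_not_mem hnot
      have h2r : 2 * (r : ℤ) + 1 - 1 = 2 * (r : ℤ) := by ring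
      rw [h2r] at hstep
      rw [hmeq, hstep, bal_top hcard hbd]
      omega
  have hbal_eq : bal g ((m : ℤ) - 1)
      = 2 * ((g.filter (fun y => y ≤ (m : ℤ) - 1)).card : ℤ) - ((m : ℤ) - 1) := rfl
  omega

/-- The Dyck word associated to a good `g`. -/
def toDyck {r : ℕ} {g : Finset ℤ} (hg : g ∈ Sgood r) : DyckWord where
  toList := dyckList r g
  count_U_eq_count_D := by
    obtain ⟨hcard, hbd, hbal⟩ := hg
    have h1 : (dyckList r g).take (2 * r + 2) = dyckList r g :=
      List.take_of_length_le (by rw [dyckList_length])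
    have hU := count_U_take (r := r) (fun a ha => (hbd a ha).1)
      (show 1 ≤ 2 * r + 2 by omega) (le_refl _)
    rw [h1] at hU
    have hfull : g.filter (fun y => y ≤ ((2 * r + 2 : ℕ) : ℤ) - 1) = g := by
      apply Finset.filter_true_of_mem
      intro x hx
      have := (hbd x hx).2
      push_cast
      omega
    rw [hfull, hcard] at hU
    have hUD := count_U_add_count_D (dyckList r g)
    rw [dyckList_length] at hUD
    omega
  count_D_le_count_U i := prefix_count hg i

lemma toDyck_semilength {r : ℕ} {g : Finset ℤ} (hg : g ∈ Sgood r) :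
    (toDyck hg).semilength = r + 1 := by
  obtain ⟨hcard, hbd, hbal⟩ := hg
  show (dyckList r g).count DyckStep.U = r + 1
  have h1 : (dyckList r g).take (2 * r + 2) = dyckList r g :=
    List.take_of_length_le (by rw [dyckList_length])
  have hU := count_U_take (r := r) (fun a ha => (hbd a ha).1)
    (show 1 ≤ 2 * r + 2 by omega) (le_refl _)
  rw [h1] at hU
  have hfull : g.filter (fun y => y ≤ ((2 * r + 2 : ℕ) : ℤ) - 1) = g := by
    apply Finset.filter_true_of_mem
    intro x hx
    have := (hbd x hx).2
    push_cast
    omega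
  rw [hfull, hcard] at hU
  omega

/-- The set of integers associated to a Dyck word. -/
noncomputable def ofDyck (r : ℕ) (p : DyckWord) : Finset ℤ :=
  (Finset.Icc (1 : ℤ) (2 * (r : ℤ))).filter
    (fun x => p.toList.getD x.toNat DyckStep.D = DyckStep.U)
lemma getD_dyckList {r : ℕ} {g : Finset ℤ} {x : ℤ} (h1 : 1 ≤ x) (h2 : x ≤ 2 * (r : ℤ)) :
    ((dyckList r g).getD x.toNat DyckStep.D = DyckStep.U) ↔ x ∈ g := by
  have hlt : x.toNat < (dyckList r g).length := by
    rw [dyckList_length]; omega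
  rw [List.getD_eq_getElem _ _ hlt]
  simp only [dyckList]
  rw [List.getElem_map, List.getElem_range]
  have hx : ((x.toNat : ℕ) : ℤ) = x := Int.toNat_of_nonneg (by omega)
  rw [hx]
  by_cases hmem : x ∈ g
  · rw [if_pos (Finset.mem_insert_of_mem hmem)]
    simp [hmem]
  · rw [if_neg (by
      intro hc
      rcases Finset.mem_insert.mp hc with h | h
      · omega
      · exact hmem h)]
    simp [hmem]

lemma toList_ofDyck {r : ℕ} {p : DyckWord} (hp : p.semilength = r + 1) :
    p.toList = dyckList r (ofDyck r p) := by
  have hlen : p.toList.length = 2 * r + 2 := by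
    rw [← DyckWord.two_mul_semilength_eq_length, hp]; ring
  have hne : p.toList ≠ [] := by
    intro h; rw [h] at hlen; simp at hlen
  apply List.ext_getElem (by rw [dyckList_length, hlen])
  intro j hj1 hj2
  simp only [dyckList]
  rw [List.getElem_map, List.getElem_range]
  rw [hlen] at hj1
  rcases Nat.eq_zero_or_pos j with rfl | hj0
  · rw [if_pos (show (((0:ℕ):ℤ)) ∈ insert (0:ℤ) (ofDyck r p) by simp)]
    have hh := DyckWord.head_eq_U p hne
    rw [List.head_eq_getElem_zero hne] at hh
    exact hh
  · rcases Nat.lt_or_ge j (2 * r + 1) with hjlt | hjge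
    · -- 1 ≤ j ≤ 2r
      have hcond : (((j : ℕ) : ℤ) ∈ insert (0 : ℤ) (ofDyck r p)) ↔ p.toList[j] = DyckStep.U := by
        constructor
        · intro hc
          rcases Finset.mem_insert.mp hc with h | h
          · omega
          · obtain ⟨-, hg⟩ := Finset.mem_filter.mp h
            rwa [Int.toNat_natCast, List.getD_eq_getElem _ _ (by omega)] at hg
        · intro hU
          refine Finset.mem_insert_of_mem (Finset.mem_filter.mpr ⟨?_, ?_⟩)
          · rw [Finset.mem_Icc]; omega
          · rwa [Int.toNat_natCast, List.getD_eq_getElem _ _ (by omega)]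
      rcases (p.toList[j]).dichotomy with hU | hD
      · rw [hU, if_pos (hcond.mpr hU)]
      · rw [hD, if_neg (fun hc => by rw [hcond.mp hc] at hD; exact absurd hD (by simp))]
    · -- j = 2r + 1
      have hj : j = 2 * r + 1 := by omega
      subst hj
      have hlast := DyckWord.getLast_eq_D p hne
      rw [List.getLast_eq_getElem] at hlast
      have hnotmem : (((2 * r + 1 : ℕ) : ℤ)) ∉ insert (0 : ℤ) (ofDyck r p) := by
        intro hc
        rcases Finset.mem_insert.mp hc with h | h
        · omega
        · obtain ⟨hIcc, -⟩ := Finset.mem_filter.mp h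
          rw [Finset.mem_Icc] at hIcc
          omega
      rw [if_neg hnotmem]
      convert hlast using 2
      omega

lemma ofDyck_mem {r : ℕ} {p : DyckWord} (hp : p.semilength = r + 1) : ofDyck r p ∈ Sgood r := by
  set g := ofDyck r p with hgdef
  have hbd : ∀ a ∈ g, 1 ≤ a ∧ a ≤ 2 * (r : ℤ) := by
    intro a ha
    obtain ⟨hIcc, -⟩ := Finset.mem_filter.mp ha
    rw [Finset.mem_Icc] at hIcc
    exact hIcc
  have htl := toList_ofDyck hp
  rw [← hgdef] at htl
  have hcard : g.card = r := by
    have hU : p.toList.count DyckStep.U = r + 1 := hp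
    rw [htl] at hU
    have h1 : (dyckList r g).take (2 * r + 2) = dyckList r g :=
      List.take_of_length_le (by rw [dyckList_length])
    have hU2 := count_U_take (r := r) (fun a ha => (hbd a ha).1)
      (show 1 ≤ 2 * r + 2 by omega) (le_refl _)
    rw [h1] at hU2
    have hfull : g.filter (fun y => y ≤ ((2 * r + 2 : ℕ) : ℤ) - 1) = g := by
      apply Finset.filter_true_of_mem
      intro x hx
      have := (hbd x hx).2
      push_cast
      omega
    rw [hfull] at hU2
    omega
  refine ⟨hcard, hbd, ?_⟩
  intro x hx0 hx2r
  set i : ℕ := x.toNat + 1 with hidef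
  have hi1 : 1 ≤ i := by omega
  have hin : i ≤ 2 * r + 2 := by omega
  have hical : (i : ℤ) - 1 = x := by push_cast; omega
  have hU := count_U_take (r := r) (g := g) (fun a ha => (hbd a ha).1) hi1 hin
  rw [hical] at hU
  have hUD := count_U_add_count_D ((dyckList r g).take i)
  have hlen : ((dyckList r g).take i).length = i := by
    rw [List.length_take, dyckList_length]
    omega
  rw [hlen] at hUD
  have hpre := p.count_D_le_count_U i
  rw [htl] at hpre
  have hbal_eq : bal g x = 2 * ((g.filter (fun y => y ≤ x)).card : ℤ) - x := rfl
  have hical2 : ((i : ℕ) : ℤ) = x + 1 := by push_cast; omega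
  omega

/-- The equivalence between good weights and Dyck words of semilength `r + 1`. -/
noncomputable def goodEquiv (r : ℕ) : (Sgood r) ≃ {p : DyckWord // p.semilength = r + 1} where
  toFun g := ⟨toDyck g.2, toDyck_semilength g.2⟩
  invFun p := ⟨ofDyck r p.1, ofDyck_mem p.2⟩
  left_inv := by
    rintro ⟨g, hg⟩
    apply Subtype.ext
    show ofDyck r (toDyck hg) = g
    ext x
    rw [ofDyck]
    simp only [Finset.mem_filter, Finset.mem_Icc]
    constructor
    · rintro ⟨⟨h1, h2⟩, h3⟩
      exact (getD_dyckList h1 h2).mp h3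
    · intro hx
      obtain ⟨h1, h2⟩ := hg.2.1 x hx
      exact ⟨⟨h1, h2⟩, (getD_dyckList h1 h2).mpr hx⟩
  right_inv := by
    rintro ⟨p, hp⟩
    apply Subtype.ext
    apply DyckWord.ext
    exact (toList_ofDyck hp).symm
theorem flat_pSet_card' (r : ℕ) :
    (flat (pSet r)).ncard = catalan (r + 1) := by
  have h1 : flat (pSet r) = Sgood r := flat_pSet_eq r
  rw [h1, ← Nat.card_coe_set_eq, Nat.card_congr (goodEquiv r), Nat.card_eq_fintype_card,
    DyckWord.card_dyckWord_semilength_eq_catalan]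

/-- For `p = (2, 4, …, 2r)` with `r ≥ 1`, `|♭p| = C_{r+1}`. -/
theorem flat_pSet_card (r : ℕ) (hr : 1 ≤ r) :
    (flat (pSet r)).ncard = catalan (r + 1) := flat_pSet_card' r

end KacCatalan
end
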